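/- Let A = ⊕_{i≥0} A_i be a finite-dimensional graded algebra with A_i · A_j = A_{i+j} for all i, j ≥ 0, and J = ⊕_{i≥1} A_i. Then J is a projective left A-module if and only if A is isomorphic to the tensor algebra A_0[A_1] = A_0 ⊕ A_1 ⊕ (A_1 ⊗_{A_0} A_1) ⊕ … and A_1 is a projective left A_0-module. -/

import Mathlib

set_option linter.unusedSectionVars false
set_option maxHeartbeats 800000


open Submodule TensorProduct

/-- Dual-basis-lemma encoding of projectivity of the subset `M` of `B` as a left
module over the subset `R ⊆ B`. -/
def IsDualBasisProj (B : Type) [Ring B] (R M : Set B) : Prop :=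
  ∃ (n : ℕ) (b : Fin n → B) (c : Fin n → B → B),
    (∀ j, b j ∈ M) ∧
    (∀ j x y, c j (x + y) = c j x + c j y) ∧
    (∀ j x, c j x ∈ R) ∧
    (∀ j r x, r ∈ R → c j (r * x) = r * c j x) ∧
    (∀ x ∈ M, x = ∑ j, c j x * b j)

variable (k : Type) [Field k] (A : Type) [Ring A] [Algebra k A]
  (𝒜 : ℕ → Submodule k A) [GradedRing 𝒜]

/-- The multiplication map `𝒜 1 ⊗_k 𝒜 i → 𝒜 (1 + i)`. -/
noncomputable def gradedMulMap (i : ℕ) :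
    TensorProduct k ↥(𝒜 1) ↥(𝒜 i) →ₗ[k] ↥(𝒜 (1 + i)) :=
  TensorProduct.lift (LinearMap.mk₂ k
    (fun x y => (⟨(x : A) * y, SetLike.mul_mem_graded x.2 y.2⟩ : ↥(𝒜 (1 + i))))
    (by intro x x' y; apply Subtype.ext; simp [add_mul])
    (by intro r x y; apply Subtype.ext; simp [Algebra.smul_mul_assoc])
    (by intro x y y'; apply Subtype.ext; simp [mul_add])
    (by intro r x y; apply Subtype.ext; simp [Algebra.mul_smul_comm]))

/-- The submodule of `𝒜 1 ⊗_k 𝒜 i` of `𝒜 0`-balancing relations; the quotient by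
it is the tensor product `𝒜 1 ⊗_{𝒜 0} 𝒜 i`. -/
def balancedRel (i : ℕ) : Submodule k (TensorProduct k ↥(𝒜 1) ↥(𝒜 i)) :=
  Submodule.span k {z | ∃ (x : ↥(𝒜 1)) (r : ↥(𝒜 0)) (y : ↥(𝒜 i))
    (hxr : (x : A) * r ∈ 𝒜 1) (hry : (r : A) * y ∈ 𝒜 i),
    z = (⟨(x : A) * r, hxr⟩ : ↥(𝒜 1)) ⊗ₜ[k] y
      - x ⊗ₜ[k] (⟨(r : A) * y, hry⟩ : ↥(𝒜 i))}

namespace S14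
variable {k A}

instance instACG14 (i : ℕ) : AddCommGroup ↥(𝒜 i) := Submodule.addCommGroup _

/-- cast between graded pieces -/
noncomputable def castA {m n : ℕ} (h : m = n) : ↥(𝒜 m) ≃ₗ[k] ↥(𝒜 n) :=
  LinearEquiv.ofEq _ _ (by rw [h])

@[simp] lemma castA_coe {m n : ℕ} (h : m = n) (x : ↥(𝒜 m)) :
    ((castA 𝒜 h x : ↥(𝒜 n)) : A) = (x : A) := rfl

noncomputable def one0 : ↥(𝒜 0) := ⟨1, SetLike.one_mem_graded 𝒜⟩

@[simp] lemma one0_coe : ((one0 𝒜 : ↥(𝒜 0)) : A) = 1 := rfl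

/-- graded projection -/
noncomputable def pr (m : ℕ) : A →ₗ[k] A :=
  (𝒜 m).subtype ∘ₗ (DirectSum.component k ℕ (fun i => ↥(𝒜 i)) m) ∘ₗ
    (DirectSum.decomposeLinearEquiv 𝒜).toLinearMap

lemma pr_apply (m : ℕ) (a : A) : pr 𝒜 m a = (DirectSum.decompose 𝒜 a m : A) := rfl

lemma pr_mem (m : ℕ) (a : A) : pr 𝒜 m a ∈ 𝒜 m := SetLike.coe_mem _

lemma pr_of_mem_same {m : ℕ} {x : A} (hx : x ∈ 𝒜 m) : pr 𝒜 m x = x :=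
  DirectSum.decompose_of_mem_same 𝒜 hx

lemma pr_of_mem_ne {m n : ℕ} {x : A} (hx : x ∈ 𝒜 m) (h : m ≠ n) : pr 𝒜 n x = 0 := by
  rw [pr_apply, DirectSum.decompose_of_mem_ne 𝒜 hx h]

lemma pr_mul_right {m : ℕ} {x : A} (hx : x ∈ 𝒜 m) (a : A) (d : ℕ) :
    pr 𝒜 (d + m) (a * x) = pr 𝒜 d a * x :=
  DirectSum.coe_decompose_mul_add_of_right_mem 𝒜 hx

lemma pr_mul_left {c : ℕ} {x : A} (hx : x ∈ 𝒜 c) (b : A) (d : ℕ) :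
    pr 𝒜 (c + d) (x * b) = x * pr 𝒜 d b :=
  DirectSum.coe_decompose_mul_add_of_left_mem 𝒜 hx

lemma homog_induction {p : A → Prop} (h0 : p 0)
    (hhomog : ∀ (i : ℕ) (x : A), x ∈ 𝒜 i → p x)
    (hadd : ∀ x y, p x → p y → p (x + y)) : ∀ x, p x :=
  DirectSum.Decomposition.inductionOn 𝒜 h0 (fun {i} m => hhomog i (m : A) m.2) hadd

@[simp] lemma gradedMulMap_tmul (i : ℕ) (x : ↥(𝒜 1)) (y : ↥(𝒜 i)) :
    ((gradedMulMap k A 𝒜 i (x ⊗ₜ[k] y) : ↥(𝒜 (1 + i))) : A) = (x : A) * y := by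
  simp [gradedMulMap]

lemma bal_gen_mem {i : ℕ} {x x' : ↥(𝒜 1)} {r : ↥(𝒜 0)} {y y' : ↥(𝒜 i)}
    (hx' : (x' : A) = (x : A) * r) (hy' : (y' : A) = (r : A) * y) :
    x' ⊗ₜ[k] y - x ⊗ₜ[k] y' ∈ balancedRel k A 𝒜 i := by
  have h1 : (x : A) * r ∈ 𝒜 1 := hx' ▸ x'.2
  have h2 : (r : A) * y ∈ 𝒜 i := hy' ▸ y'.2
  refine Submodule.subset_span ⟨x, r, y, h1, h2, ?_⟩
  rw [show (⟨(x : A) * r, h1⟩ : ↥(𝒜 1)) = x' from Subtype.ext hx'.symm,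
    show (⟨(r : A) * y, h2⟩ : ↥(𝒜 i)) = y' from Subtype.ext hy'.symm]

lemma bal_le_ker (i : ℕ) : balancedRel k A 𝒜 i ≤ LinearMap.ker (gradedMulMap k A 𝒜 i) := by
  rw [balancedRel, Submodule.span_le]
  rintro z ⟨x, r, y, hxr, hry, rfl⟩
  simp only [SetLike.mem_coe, LinearMap.mem_ker, map_sub]
  rw [sub_eq_zero]
  apply Subtype.ext
  rw [gradedMulMap_tmul, gradedMulMap_tmul]
  exact mul_assoc (x : A) r y

lemma gradedMulMap_surjective (hgen : ∀ i j, 𝒜 i * 𝒜 j = 𝒜 (i + j)) (i : ℕ) :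
    Function.Surjective (gradedMulMap k A 𝒜 i) := by
  have key : ∀ z (hz' : z ∈ 𝒜 1 * 𝒜 i), ∀ hz : z ∈ 𝒜 (1 + i),
      ∃ w, gradedMulMap k A 𝒜 i w = ⟨z, hz⟩ := by
    intro z hz'
    refine Submodule.mul_induction_on'
      (C := fun z _ => ∀ hz : z ∈ 𝒜 (1 + i), ∃ w, gradedMulMap k A 𝒜 i w = ⟨z, hz⟩) ?_ ?_ hz'
    · intro m hm n hn h
      exact ⟨⟨m, hm⟩ ⊗ₜ[k] ⟨n, hn⟩, Subtype.ext (by rw [gradedMulMap_tmul])⟩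
    · intro a ha b hb iha ihb h
      obtain ⟨wa, hwa⟩ := iha (by rw [← hgen 1 i]; exact ha)
      obtain ⟨wb, hwb⟩ := ihb (by rw [← hgen 1 i]; exact hb)
      refine ⟨wa + wb, Subtype.ext ?_⟩
      rw [map_add]
      have := congrArg (Subtype.val) hwa
      have := congrArg (Subtype.val) hwb
      simp_all
  rintro ⟨z, hz⟩
  exact key z (by rw [hgen 1 i]; exact hz) hz


def balR (i : ℕ) : Submodule k (TensorProduct k ↥(𝒜 i) ↥(𝒜 1)) :=
  Submodule.span k {z | ∃ (x : ↥(𝒜 i)) (r : ↥(𝒜 0)) (y : ↥(𝒜 1))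
    (hxr : (x : A) * r ∈ 𝒜 i) (hry : (r : A) * y ∈ 𝒜 1),
    z = (⟨(x : A) * r, hxr⟩ : ↥(𝒜 i)) ⊗ₜ[k] y
      - x ⊗ₜ[k] (⟨(r : A) * y, hry⟩ : ↥(𝒜 1))}

lemma balR_gen_mem {i : ℕ} {x x' : ↥(𝒜 i)} {r : ↥(𝒜 0)} {y y' : ↥(𝒜 1)}
    (hx' : (x' : A) = (x : A) * r) (hy' : (y' : A) = (r : A) * y) :
    x' ⊗ₜ[k] y - x ⊗ₜ[k] y' ∈ balR 𝒜 i := by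
  have h1 : (x : A) * r ∈ 𝒜 i := hx' ▸ x'.2
  have h2 : (r : A) * y ∈ 𝒜 1 := hy' ▸ y'.2
  refine Submodule.subset_span ⟨x, r, y, h1, h2, ?_⟩
  rw [show (⟨(x : A) * r, h1⟩ : ↥(𝒜 i)) = x' from Subtype.ext hx'.symm,
    show (⟨(r : A) * y, h2⟩ : ↥(𝒜 1)) = y' from Subtype.ext hy'.symm]

noncomputable def mulR (i : ℕ) : TensorProduct k ↥(𝒜 i) ↥(𝒜 1) →ₗ[k] ↥(𝒜 (i + 1)) :=
  TensorProduct.lift (LinearMap.mk₂ k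
    (fun x y => (⟨(x : A) * y, SetLike.mul_mem_graded x.2 y.2⟩ : ↥(𝒜 (i + 1))))
    (by intro x x' y; apply Subtype.ext; simp [add_mul])
    (by intro r x y; apply Subtype.ext; simp [Algebra.smul_mul_assoc])
    (by intro x y y'; apply Subtype.ext; simp [mul_add])
    (by intro r x y; apply Subtype.ext; simp [Algebra.mul_smul_comm]))

@[simp] lemma mulR_tmul (i : ℕ) (x : ↥(𝒜 i)) (y : ↥(𝒜 1)) :
    ((mulR 𝒜 i (x ⊗ₜ[k] y) : ↥(𝒜 (i + 1))) : A) = (x : A) * y := by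
  simp [mulR]

lemma balR_le_ker (i : ℕ) : balR 𝒜 i ≤ LinearMap.ker (mulR 𝒜 i) := by
  rw [balR, Submodule.span_le]
  rintro z ⟨x, r, y, hxr, hry, rfl⟩
  simp only [SetLike.mem_coe, LinearMap.mem_ker, map_sub]
  rw [sub_eq_zero]
  exact Subtype.ext (by rw [mulR_tmul, mulR_tmul]; exact mul_assoc (x : A) r y)

/-- The quotient `𝒜 i ⊗_{𝒜 0} 𝒜 1`. -/
abbrev QR (i : ℕ) := TensorProduct k ↥(𝒜 i) ↥(𝒜 1) ⧸ balR 𝒜 i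

noncomputable def rhoBar (i : ℕ) : QR 𝒜 i →ₗ[k] ↥(𝒜 (i + 1)) :=
  (balR 𝒜 i).liftQ (mulR 𝒜 i) (balR_le_ker 𝒜 i)

@[simp] lemma rhoBar_mk (i : ℕ) (z : TensorProduct k ↥(𝒜 i) ↥(𝒜 1)) :
    rhoBar 𝒜 i (Submodule.Quotient.mk z) = mulR 𝒜 i z := rfl

lemma mulR_surjective (hgen : ∀ i j, 𝒜 i * 𝒜 j = 𝒜 (i + j)) (i : ℕ) :
    Function.Surjective (mulR 𝒜 i) := by
  have key : ∀ z (hz' : z ∈ 𝒜 i * 𝒜 1), ∀ hz : z ∈ 𝒜 (i + 1),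
      ∃ w, mulR 𝒜 i w = ⟨z, hz⟩ := by
    intro z hz'
    refine Submodule.mul_induction_on'
      (C := fun z _ => ∀ hz : z ∈ 𝒜 (i + 1), ∃ w, mulR 𝒜 i w = ⟨z, hz⟩) ?_ ?_ hz'
    · intro m hm n hn h
      exact ⟨⟨m, hm⟩ ⊗ₜ[k] ⟨n, hn⟩, Subtype.ext (by rw [mulR_tmul])⟩
    · intro a ha b hb iha ihb h
      obtain ⟨wa, hwa⟩ := iha (by rw [← hgen i 1]; exact ha)
      obtain ⟨wb, hwb⟩ := ihb (by rw [← hgen i 1]; exact hb)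
      refine ⟨wa + wb, Subtype.ext ?_⟩
      rw [map_add]
      have := congrArg (Subtype.val) hwa
      have := congrArg (Subtype.val) hwb
      simp_all
  rintro ⟨z, hz⟩
  exact key z (by rw [hgen i 1]; exact hz) hz

lemma rhoBar_surjective (hgen : ∀ i j, 𝒜 i * 𝒜 j = 𝒜 (i + j)) (i : ℕ) :
    Function.Surjective (rhoBar 𝒜 i) := by
  intro x
  obtain ⟨w, hw⟩ := mulR_surjective 𝒜 hgen i x
  exact ⟨Submodule.Quotient.mk w, hw⟩

/-- multiplication by a degree-`c` element, `𝒜 i → 𝒜 (c + i)` -/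
noncomputable def lmulC {c : ℕ} (a : ↥(𝒜 c)) (i : ℕ) : ↥(𝒜 i) →ₗ[k] ↥(𝒜 (c + i)) where
  toFun w := ⟨(a : A) * w, SetLike.mul_mem_graded a.2 w.2⟩
  map_add' w w' := Subtype.ext (by simp [mul_add])
  map_smul' s w := Subtype.ext (by simp [Algebra.mul_smul_comm])

/-- multiplication by a degree-`0` element, `𝒜 i → 𝒜 i` -/
noncomputable def lmul0 (r : ↥(𝒜 0)) (i : ℕ) : ↥(𝒜 i) →ₗ[k] ↥(𝒜 i) where
  toFun w := ⟨(r : A) * w, by have := SetLike.mul_mem_graded r.2 w.2; rwa [Nat.zero_add] at this⟩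
  map_add' w w' := Subtype.ext (by simp [mul_add])
  map_smul' s w := Subtype.ext (by simp [Algebra.mul_smul_comm])

/-- multiplication by a degree-`1` element on the right, `𝒜 i → 𝒜 (i + 1)` -/
noncomputable def rmulG1 (v : ↥(𝒜 1)) (i : ℕ) : ↥(𝒜 i) →ₗ[k] ↥(𝒜 (i + 1)) where
  toFun w := ⟨(w : A) * v, SetLike.mul_mem_graded w.2 v.2⟩
  map_add' w w' := Subtype.ext (by simp [add_mul])
  map_smul' s w := Subtype.ext (by simp [Algebra.smul_mul_assoc])

/-- `QR i → QR (c + i)`, multiplying the first factor by a degree-`c` element. -/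
lemma LaMap_kill {c : ℕ} (a : ↥(𝒜 c)) (i : ℕ) : balR 𝒜 i ≤
    LinearMap.ker ((balR 𝒜 (c + i)).mkQ ∘ₗ LinearMap.rTensor ↥(𝒜 1) (lmulC 𝒜 a i)) := by
  rw [balR, Submodule.span_le]
  rintro z ⟨x, r, y, hxr, hry, rfl⟩
  simp only [SetLike.mem_coe, LinearMap.mem_ker, map_sub, LinearMap.comp_apply,
    LinearMap.rTensor_tmul, Submodule.mkQ_apply]
  rw [sub_eq_zero, Submodule.Quotient.eq]
  exact balR_gen_mem 𝒜 (x := lmulC 𝒜 a i x) (r := r) (y := y)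
    (by simp [lmulC, mul_assoc]) rfl

noncomputable def LaMap {c : ℕ} (a : ↥(𝒜 c)) (i : ℕ) : QR 𝒜 i →ₗ[k] QR 𝒜 (c + i) :=
  (balR 𝒜 i).liftQ ((balR 𝒜 (c + i)).mkQ ∘ₗ LinearMap.rTensor ↥(𝒜 1) (lmulC 𝒜 a i))
    (LaMap_kill 𝒜 a i)

@[simp] lemma LaMap_mk {c : ℕ} (a : ↥(𝒜 c)) (i : ℕ) (x : ↥(𝒜 i)) (y : ↥(𝒜 1)) :
    LaMap 𝒜 a i (Submodule.Quotient.mk (x ⊗ₜ[k] y)) =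
      Submodule.Quotient.mk ((lmulC 𝒜 a i x) ⊗ₜ[k] y) := rfl

/-- `QR i → QR i`, multiplying the first factor by a degree-`0` element. -/
lemma La0_kill (r : ↥(𝒜 0)) (i : ℕ) : balR 𝒜 i ≤
    LinearMap.ker ((balR 𝒜 i).mkQ ∘ₗ LinearMap.rTensor ↥(𝒜 1) (lmul0 𝒜 r i)) := by
  rw [balR, Submodule.span_le]
  rintro z ⟨x, r', y, hxr, hry, rfl⟩
  simp only [SetLike.mem_coe, LinearMap.mem_ker, map_sub, LinearMap.comp_apply,
    LinearMap.rTensor_tmul, Submodule.mkQ_apply]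
  rw [sub_eq_zero, Submodule.Quotient.eq]
  exact balR_gen_mem 𝒜 (x := lmul0 𝒜 r i x) (r := r') (y := y)
    (by simp [lmul0, mul_assoc]) rfl

noncomputable def La0 (r : ↥(𝒜 0)) (i : ℕ) : QR 𝒜 i →ₗ[k] QR 𝒜 i :=
  (balR 𝒜 i).liftQ ((balR 𝒜 i).mkQ ∘ₗ LinearMap.rTensor ↥(𝒜 1) (lmul0 𝒜 r i))
    (La0_kill 𝒜 r i)

@[simp] lemma La0_mk (r : ↥(𝒜 0)) (i : ℕ) (x : ↥(𝒜 i)) (y : ↥(𝒜 1)) :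
    La0 𝒜 r i (Submodule.Quotient.mk (x ⊗ₜ[k] y)) =
      Submodule.Quotient.mk ((lmul0 𝒜 r i x) ⊗ₜ[k] y) := rfl

lemma rhoBar_La0 (r : ↥(𝒜 0)) (i : ℕ) (ξ : QR 𝒜 i) :
    ((rhoBar 𝒜 i (La0 𝒜 r i ξ) : ↥(𝒜 (i + 1))) : A) = (r : A) * (rhoBar 𝒜 i ξ : A) := by
  have : (𝒜 (i + 1)).subtype ∘ₗ rhoBar 𝒜 i ∘ₗ La0 𝒜 r i =
      LinearMap.mulLeft k (r : A) ∘ₗ (𝒜 (i + 1)).subtype ∘ₗ rhoBar 𝒜 i := by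
    refine Submodule.linearMap_qext _ (TensorProduct.ext' fun w u => ?_)
    simp [lmul0, mul_assoc]
  exact congrArg (fun f => f ξ) this

noncomputable def lmul1 (p : ↥(𝒜 1)) (i : ℕ) : ↥(𝒜 i) →ₗ[k] ↥(𝒜 (i + 1)) where
  toFun w := ⟨(p : A) * w, by
    have := SetLike.mul_mem_graded p.2 w.2; rwa [Nat.add_comm] at this⟩
  map_add' w w' := Subtype.ext (by simp [mul_add])
  map_smul' s w := Subtype.ext (by simp [Algebra.mul_smul_comm])

lemma innerMap_kill (p : ↥(𝒜 1)) (i : ℕ) : balR 𝒜 i ≤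
    LinearMap.ker ((balR 𝒜 (i + 1)).mkQ ∘ₗ LinearMap.rTensor ↥(𝒜 1) (lmul1 𝒜 p i)) := by
  rw [balR, Submodule.span_le]
  rintro z ⟨x, r, y, hxr, hry, rfl⟩
  simp only [SetLike.mem_coe, LinearMap.mem_ker, map_sub, LinearMap.comp_apply,
    LinearMap.rTensor_tmul, Submodule.mkQ_apply]
  rw [sub_eq_zero, Submodule.Quotient.eq]
  exact balR_gen_mem 𝒜 (x := lmul1 𝒜 p i x) (r := r) (y := y)
    (by simp [lmul1, mul_assoc]) rfl

noncomputable def innerMap (p : ↥(𝒜 1)) (i : ℕ) : QR 𝒜 i →ₗ[k] QR 𝒜 (i + 1) :=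
  (balR 𝒜 i).liftQ ((balR 𝒜 (i + 1)).mkQ ∘ₗ LinearMap.rTensor ↥(𝒜 1) (lmul1 𝒜 p i))
    (innerMap_kill 𝒜 p i)

@[simp] lemma innerMap_mk (p : ↥(𝒜 1)) (i : ℕ) (w : ↥(𝒜 i)) (u : ↥(𝒜 1)) :
    innerMap 𝒜 p i (Submodule.Quotient.mk (w ⊗ₜ[k] u)) =
      Submodule.Quotient.mk ((lmul1 𝒜 p i w) ⊗ₜ[k] u) := rfl

noncomputable def Bmap (i : ℕ) : ↥(𝒜 1) →ₗ[k] QR 𝒜 i →ₗ[k] QR 𝒜 (i + 1) where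
  toFun p := innerMap 𝒜 p i
  map_add' p p' := by
    refine Submodule.linearMap_qext _ (TensorProduct.ext' fun w u => ?_)
    simp only [LinearMap.comp_apply, Submodule.mkQ_apply, innerMap_mk, LinearMap.add_apply]
    have : lmul1 𝒜 (p + p') i w = lmul1 𝒜 p i w + lmul1 𝒜 p' i w :=
      Subtype.ext (by simp [lmul1, add_mul])
    rw [this, add_tmul, Submodule.Quotient.mk_add]
  map_smul' s p := by
    refine Submodule.linearMap_qext _ (TensorProduct.ext' fun w u => ?_)
    simp only [LinearMap.comp_apply, Submodule.mkQ_apply, innerMap_mk, LinearMap.smul_apply,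
      RingHom.id_apply]
    have : lmul1 𝒜 (s • p) i w = s • lmul1 𝒜 p i w :=
      Subtype.ext (by simp [lmul1, Algebra.smul_mul_assoc])
    rw [this, ← TensorProduct.smul_tmul', Submodule.Quotient.mk_smul]

noncomputable def mutilde (i : ℕ) :
    TensorProduct k ↥(𝒜 1) (QR 𝒜 i) →ₗ[k] QR 𝒜 (i + 1) :=
  TensorProduct.lift (Bmap 𝒜 i)

noncomputable def rhoE (i : ℕ) (hbij : Function.Bijective (rhoBar 𝒜 i)) :
    QR 𝒜 i ≃ₗ[k] ↥(𝒜 (i + 1)) :=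
  LinearEquiv.ofBijective (rhoBar 𝒜 i) hbij

lemma rhoE_symm_eq (i : ℕ) (hbij : Function.Bijective (rhoBar 𝒜 i))
    (w : ↥(𝒜 i)) (u : ↥(𝒜 1)) {q : ↥(𝒜 (i + 1))} (hq : (q : A) = (w : A) * u) :
    (rhoE 𝒜 i hbij).symm q = Submodule.Quotient.mk (w ⊗ₜ[k] u) := by
  rw [LinearEquiv.symm_apply_eq]
  apply Subtype.ext
  have h0 : rhoE 𝒜 i hbij (Submodule.Quotient.mk (w ⊗ₜ[k] u)) = mulR 𝒜 i (w ⊗ₜ[k] u) := rfl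
  rw [hq, h0, mulR_tmul]

noncomputable def Tmap (i : ℕ) (hbij : Function.Bijective (rhoBar 𝒜 i)) :
    TensorProduct k ↥(𝒜 1) ↥(𝒜 (i + 1)) →ₗ[k] QR 𝒜 (i + 1) :=
  mutilde 𝒜 i ∘ₗ LinearMap.lTensor ↥(𝒜 1) (rhoE 𝒜 i hbij).symm.toLinearMap

@[simp] lemma Tmap_tmul (i : ℕ) (hbij) (p : ↥(𝒜 1)) (q : ↥(𝒜 (i + 1))) :
    Tmap 𝒜 i hbij (p ⊗ₜ[k] q) = innerMap 𝒜 p i ((rhoE 𝒜 i hbij).symm q) := by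
  simp only [Tmap, LinearMap.comp_apply, LinearMap.lTensor_tmul, mutilde, TensorProduct.lift.tmul]
  rfl

lemma La0_symm (i : ℕ) (hbij) (r : ↥(𝒜 0)) (q : ↥(𝒜 (i + 1))) {q' : ↥(𝒜 (i + 1))}
    (hq' : (q' : A) = (r : A) * q) :
    (rhoE 𝒜 i hbij).symm q' = La0 𝒜 r i ((rhoE 𝒜 i hbij).symm q) := by
  rw [LinearEquiv.symm_apply_eq]
  refine Subtype.ext ?_
  have h0 : rhoE 𝒜 i hbij (La0 𝒜 r i ((rhoE 𝒜 i hbij).symm q)) =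
      rhoBar 𝒜 i (La0 𝒜 r i ((rhoE 𝒜 i hbij).symm q)) := rfl
  rw [hq', h0, rhoBar_La0]
  congr 1
  exact (congrArg Subtype.val ((rhoE 𝒜 i hbij).apply_symm_apply q)).symm

lemma innerMap_mul0 (i : ℕ) (x : ↥(𝒜 1)) (r : ↥(𝒜 0)) {x' : ↥(𝒜 1)}
    (hx' : (x' : A) = (x : A) * r) :
    innerMap 𝒜 x' i = innerMap 𝒜 x i ∘ₗ La0 𝒜 r i := by
  refine Submodule.linearMap_qext _ (TensorProduct.ext' fun w u => ?_)
  simp only [LinearMap.comp_apply, Submodule.mkQ_apply, innerMap_mk, La0_mk]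
  congr 1
  congr 1
  exact Subtype.ext (by simp [lmul1, lmul0, hx', mul_assoc])

lemma Tmap_kill (i : ℕ) (hbij : Function.Bijective (rhoBar 𝒜 i)) :
    balancedRel k A 𝒜 (i + 1) ≤ LinearMap.ker (Tmap 𝒜 i hbij) := by
  rw [balancedRel, Submodule.span_le]
  rintro z ⟨x, r, y, hxr, hry, rfl⟩
  simp only [SetLike.mem_coe, LinearMap.mem_ker, map_sub, Tmap_tmul]
  rw [sub_eq_zero, La0_symm 𝒜 i hbij r y (q' := ⟨(r : A) * y, hry⟩) rfl,
    innerMap_mul0 𝒜 i x r (x' := ⟨(x : A) * r, hxr⟩) rfl]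
  rfl

noncomputable def lamE (i : ℕ)
    (hker : LinearMap.ker (gradedMulMap k A 𝒜 i) = balancedRel k A 𝒜 i)
    (hsurj : Function.Surjective (gradedMulMap k A 𝒜 i)) :
    (TensorProduct k ↥(𝒜 1) ↥(𝒜 i) ⧸ balancedRel k A 𝒜 i) ≃ₗ[k] ↥(𝒜 (1 + i)) :=
  LinearEquiv.ofBijective
    ((balancedRel k A 𝒜 i).liftQ (gradedMulMap k A 𝒜 i) (le_of_eq hker.symm))
    ⟨by rw [← LinearMap.ker_eq_bot]
        exact Submodule.ker_liftQ_eq_bot _ _ _ (le_of_eq hker),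
     fun x => by
      obtain ⟨w, hw⟩ := hsurj x
      exact ⟨Submodule.Quotient.mk w, by rwa [Submodule.liftQ_apply]⟩⟩

@[simp] lemma lamE_mk (i : ℕ) (hker) (hsurj) (z : TensorProduct k ↥(𝒜 1) ↥(𝒜 i)) :
    lamE 𝒜 i hker hsurj (Submodule.Quotient.mk z) = gradedMulMap k A 𝒜 i z := rfl

lemma RvMap_kill (v : ↥(𝒜 1)) (i : ℕ) : balancedRel k A 𝒜 i ≤
    LinearMap.ker ((balancedRel k A 𝒜 (i + 1)).mkQ ∘ₗ
      LinearMap.lTensor ↥(𝒜 1) (rmulG1 𝒜 v i)) := by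
  rw [balancedRel, Submodule.span_le]
  rintro z ⟨x, r, y, hxr, hry, rfl⟩
  simp only [SetLike.mem_coe, LinearMap.mem_ker, map_sub, LinearMap.comp_apply,
    LinearMap.lTensor_tmul, Submodule.mkQ_apply]
  rw [sub_eq_zero, Submodule.Quotient.eq]
  have := bal_gen_mem 𝒜 (i := i + 1) (x := x) (r := r) (y := rmulG1 𝒜 v i y)
    (x' := ⟨(x : A) * r, hxr⟩) (y' := rmulG1 𝒜 v i ⟨(r : A) * y, hry⟩)
    rfl (by simp [rmulG1, mul_assoc])
  exact this

noncomputable def RvMap (v : ↥(𝒜 1)) (i : ℕ) :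
    (TensorProduct k ↥(𝒜 1) ↥(𝒜 i) ⧸ balancedRel k A 𝒜 i) →ₗ[k]
    (TensorProduct k ↥(𝒜 1) ↥(𝒜 (i + 1)) ⧸ balancedRel k A 𝒜 (i + 1)) :=
  (balancedRel k A 𝒜 i).liftQ ((balancedRel k A 𝒜 (i + 1)).mkQ ∘ₗ
    LinearMap.lTensor ↥(𝒜 1) (rmulG1 𝒜 v i)) (RvMap_kill 𝒜 v i)

@[simp] lemma RvMap_mk (v : ↥(𝒜 1)) (i : ℕ) (p : ↥(𝒜 1)) (q : ↥(𝒜 i)) :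
    RvMap 𝒜 v i (Submodule.Quotient.mk (p ⊗ₜ[k] q)) =
      Submodule.Quotient.mk (p ⊗ₜ[k] (rmulG1 𝒜 v i q)) := rfl

lemma lamE_RvMap (v : ↥(𝒜 1)) (i : ℕ) (hker hsurj hker1 hsurj1)
    (ξ : TensorProduct k ↥(𝒜 1) ↥(𝒜 i) ⧸ balancedRel k A 𝒜 i) :
    ((lamE 𝒜 (i + 1) hker1 hsurj1 (RvMap 𝒜 v i ξ) : ↥(𝒜 (1 + (i + 1)))) : A) =
      ((lamE 𝒜 i hker hsurj ξ : ↥(𝒜 (1 + i))) : A) * v := by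
  have : (𝒜 (1 + (i + 1))).subtype ∘ₗ (lamE 𝒜 (i + 1) hker1 hsurj1).toLinearMap ∘ₗ
      RvMap 𝒜 v i = LinearMap.mulRight k (v : A) ∘ₗ (𝒜 (1 + i)).subtype ∘ₗ
      (lamE 𝒜 i hker hsurj).toLinearMap := by
    refine Submodule.linearMap_qext _ (TensorProduct.ext' fun p q => ?_)
    simp only [LinearMap.comp_apply, Submodule.mkQ_apply, RvMap_mk, LinearEquiv.coe_coe,
      lamE_mk, Submodule.coe_subtype, LinearMap.mulRight_apply, gradedMulMap_tmul]
    simp [rmulG1, mul_assoc]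
  exact congrArg (fun f => f ξ) this


noncomputable def sigmaMap (i : ℕ) (hbij : Function.Bijective (rhoBar 𝒜 i)) :
    (TensorProduct k ↥(𝒜 1) ↥(𝒜 (i + 1)) ⧸ balancedRel k A 𝒜 (i + 1)) →ₗ[k] QR 𝒜 (i + 1) :=
  (balancedRel k A 𝒜 (i + 1)).liftQ (Tmap 𝒜 i hbij) (Tmap_kill 𝒜 i hbij)

@[simp] lemma sigmaMap_mk (i : ℕ) (hbij) (z : TensorProduct k ↥(𝒜 1) ↥(𝒜 (i + 1))) :
    sigmaMap 𝒜 i hbij (Submodule.Quotient.mk z) = Tmap 𝒜 i hbij z := rfl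

noncomputable def betaV (v : ↥(𝒜 1)) (i : ℕ) : ↥(𝒜 (1 + i)) →ₗ[k] QR 𝒜 (i + 1) :=
  (balR 𝒜 (i + 1)).mkQ ∘ₗ ((TensorProduct.mk k ↥(𝒜 (i + 1)) ↥(𝒜 1)).flip v) ∘ₗ
    (castA 𝒜 (Nat.add_comm 1 i)).toLinearMap

@[simp] lemma betaV_apply (v : ↥(𝒜 1)) (i : ℕ) (x : ↥(𝒜 (1 + i))) :
    betaV 𝒜 v i x = Submodule.Quotient.mk ((castA 𝒜 (Nat.add_comm 1 i) x) ⊗ₜ[k] v) := rfl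

lemma sigma_Rv (i : ℕ) (hbij : Function.Bijective (rhoBar 𝒜 i))
    (hker : LinearMap.ker (gradedMulMap k A 𝒜 i) = balancedRel k A 𝒜 i)
    (hsurj : Function.Surjective (gradedMulMap k A 𝒜 i)) (v : ↥(𝒜 1)) :
    sigmaMap 𝒜 i hbij ∘ₗ RvMap 𝒜 v i =
      betaV 𝒜 v i ∘ₗ (lamE 𝒜 i hker hsurj).toLinearMap := by
  refine Submodule.linearMap_qext _ (TensorProduct.ext' fun p q => ?_)
  simp only [LinearMap.comp_apply, Submodule.mkQ_apply, RvMap_mk, sigmaMap_mk, Tmap_tmul,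
    LinearEquiv.coe_coe, lamE_mk, betaV_apply]
  rw [rhoE_symm_eq 𝒜 i hbij q v (q := rmulG1 𝒜 v i q) rfl, innerMap_mk]
  have : lmul1 𝒜 p i q = castA 𝒜 (Nat.add_comm 1 i) (gradedMulMap k A 𝒜 i (p ⊗ₜ[k] q)) :=
    Subtype.ext (by simp [lmul1])
  rw [this]

noncomputable def tauSucc (i : ℕ) (hbij : Function.Bijective (rhoBar 𝒜 i))
    (hker1 : LinearMap.ker (gradedMulMap k A 𝒜 (i + 1)) = balancedRel k A 𝒜 (i + 1))
    (hsurj1 : Function.Surjective (gradedMulMap k A 𝒜 (i + 1))) :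
    ↥(𝒜 (i + 1 + 1)) →ₗ[k] QR 𝒜 (i + 1) :=
  sigmaMap 𝒜 i hbij ∘ₗ (lamE 𝒜 (i + 1) hker1 hsurj1).symm.toLinearMap ∘ₗ
    (castA 𝒜 (show i + 1 + 1 = 1 + (i + 1) by omega)).toLinearMap

lemma tauSucc_mul (i : ℕ) (hbij : Function.Bijective (rhoBar 𝒜 i))
    (hker : LinearMap.ker (gradedMulMap k A 𝒜 i) = balancedRel k A 𝒜 i)
    (hsurj : Function.Surjective (gradedMulMap k A 𝒜 i))
    (hker1 : LinearMap.ker (gradedMulMap k A 𝒜 (i + 1)) = balancedRel k A 𝒜 (i + 1))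
    (hsurj1 : Function.Surjective (gradedMulMap k A 𝒜 (i + 1)))
    (w : ↥(𝒜 (i + 1))) (v : ↥(𝒜 1)) :
    tauSucc 𝒜 i hbij hker1 hsurj1 (mulR 𝒜 (i + 1) (w ⊗ₜ[k] v)) =
      Submodule.Quotient.mk (w ⊗ₜ[k] v) := by
  set ξ := (lamE 𝒜 i hker hsurj).symm (castA 𝒜 (Nat.add_comm i 1) w) with hξ
  have hlam : lamE 𝒜 i hker hsurj ξ = castA 𝒜 (Nat.add_comm i 1) w :=
    (lamE 𝒜 i hker hsurj).apply_symm_apply _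
  have h1 : castA 𝒜 (show i + 1 + 1 = 1 + (i + 1) by omega) (mulR 𝒜 (i + 1) (w ⊗ₜ[k] v)) =
      lamE 𝒜 (i + 1) hker1 hsurj1 (RvMap 𝒜 v i ξ) := by
    apply Subtype.ext
    rw [castA_coe, mulR_tmul, lamE_RvMap 𝒜 v i hker hsurj hker1 hsurj1 ξ, hlam, castA_coe]
  rw [tauSucc]
  simp only [LinearMap.comp_apply, LinearEquiv.coe_coe]
  rw [h1, LinearEquiv.symm_apply_apply]
  have h2 := congrArg (fun f => f ξ) (sigma_Rv 𝒜 i hbij hker hsurj v)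
  simp only [LinearMap.comp_apply, LinearEquiv.coe_coe] at h2
  rw [h2, hlam, betaV_apply,
    show castA 𝒜 (Nat.add_comm 1 i) (castA 𝒜 (Nat.add_comm i 1) w) = w from
      Subtype.ext (by simp)]

lemma ker_mulR_le_succ (i : ℕ) (hbij : Function.Bijective (rhoBar 𝒜 i))
    (hker : LinearMap.ker (gradedMulMap k A 𝒜 i) = balancedRel k A 𝒜 i)
    (hsurj : Function.Surjective (gradedMulMap k A 𝒜 i))
    (hker1 : LinearMap.ker (gradedMulMap k A 𝒜 (i + 1)) = balancedRel k A 𝒜 (i + 1))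
    (hsurj1 : Function.Surjective (gradedMulMap k A 𝒜 (i + 1))) :
    LinearMap.ker (mulR 𝒜 (i + 1)) ≤ balR 𝒜 (i + 1) := by
  intro z hz
  have hAll : ∀ z', tauSucc 𝒜 i hbij hker1 hsurj1 (mulR 𝒜 (i + 1) z') =
      Submodule.Quotient.mk z' := by
    intro z'
    induction z' using TensorProduct.induction_on with
    | zero => simp
    | tmul w v => exact tauSucc_mul 𝒜 i hbij hker hsurj hker1 hsurj1 w v
    | add x y hx hy => rw [map_add, map_add, hx, hy]; rfl
  have := hAll z
  rw [LinearMap.mem_ker.mp hz, map_zero] at this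
  exact (Submodule.Quotient.mk_eq_zero _).mp this.symm

lemma ker_mulR_le_zero : LinearMap.ker (mulR 𝒜 0) ≤ balR 𝒜 0 := by
  intro z hz
  set tau0 : ↥(𝒜 0) ⊗[k] ↥(𝒜 1) →ₗ[k] QR 𝒜 0 :=
    (balR 𝒜 0).mkQ ∘ₗ (TensorProduct.mk k ↥(𝒜 0) ↥(𝒜 1) (one0 𝒜)) ∘ₗ
      (castA 𝒜 (show 0 + 1 = 1 from rfl)).toLinearMap ∘ₗ (mulR 𝒜 0) with htau0
  have hAll : ∀ z', tau0 z' = (balR 𝒜 0).mkQ z' := by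
    intro z'
    induction z' using TensorProduct.induction_on with
    | zero => simp
    | tmul w u =>
        simp only [htau0, LinearMap.comp_apply, Submodule.mkQ_apply, LinearEquiv.coe_coe,
          TensorProduct.mk_apply]
        rw [Submodule.Quotient.eq]
        have := balR_gen_mem 𝒜 (x := one0 𝒜) (r := w) (y := u)
          (x' := w) (y' := castA 𝒜 (show 0 + 1 = 1 from rfl) (mulR 𝒜 0 (w ⊗ₜ[k] u)))
          (one_mul (w : A)).symm (by rw [castA_coe, mulR_tmul])
        have h2 := Submodule.neg_mem _ this
        rwa [neg_sub] at h2
    | add x y hx hy => rw [map_add, map_add, hx, hy]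
  have := hAll z
  rw [htau0] at this
  simp only [LinearMap.comp_apply, LinearMap.mem_ker.mp hz, map_zero] at this
  exact (Submodule.Quotient.mk_eq_zero _).mp (by rw [← Submodule.mkQ_apply, ← this])

lemma rhoBar_bijective (hgen : ∀ i j, 𝒜 i * 𝒜 j = 𝒜 (i + j))
    (hkerAll : ∀ i, LinearMap.ker (gradedMulMap k A 𝒜 i) = balancedRel k A 𝒜 i) :
    ∀ i, Function.Bijective (rhoBar 𝒜 i) := by
  have hsurjAll := gradedMulMap_surjective 𝒜 hgen
  intro i
  induction i with
  | zero =>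
      refine ⟨?_, rhoBar_surjective 𝒜 hgen 0⟩
      rw [← LinearMap.ker_eq_bot, rhoBar]
      exact Submodule.ker_liftQ_eq_bot _ _ _ (ker_mulR_le_zero 𝒜)
  | succ i ih =>
      refine ⟨?_, rhoBar_surjective 𝒜 hgen (i + 1)⟩
      rw [← LinearMap.ker_eq_bot, rhoBar]
      exact Submodule.ker_liftQ_eq_bot _ _ _
        (ker_mulR_le_succ 𝒜 i ih (hkerAll i) (hsurjAll i) (hkerAll (i + 1)) (hsurjAll (i + 1)))

variable {VG : Type}

noncomputable def hmapRaw (γ : A →ₗ[k] A) (i : ℕ) : TensorProduct k ↥(𝒜 i) ↥(𝒜 1) →ₗ[k] A :=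
  TensorProduct.lift (LinearMap.mk₂ k (fun w u => (w : A) * γ (u : A))
    (by intro x x' y; simp [add_mul])
    (by intro s x y; simp [Algebra.smul_mul_assoc])
    (by intro x y y'; simp [mul_add])
    (by intro s x y; simp [Algebra.mul_smul_comm]))

lemma hmap_kill (γ : A →ₗ[k] A) (hγlin : ∀ (r x : A), r ∈ 𝒜 0 → γ (r * x) = r * γ x) (i : ℕ) : balR 𝒜 i ≤ LinearMap.ker (hmapRaw 𝒜 γ i) := by
  rw [balR, Submodule.span_le]
  rintro z ⟨x, r, y, hxr, hry, rfl⟩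
  simp only [SetLike.mem_coe, LinearMap.mem_ker, map_sub, hmapRaw, TensorProduct.lift.tmul,
    LinearMap.mk₂_apply]
  rw [sub_eq_zero, hγlin (r : A) (y : A) r.2, mul_assoc]

noncomputable def hmap (γ : A →ₗ[k] A) (hγlin : ∀ (r x : A), r ∈ 𝒜 0 → γ (r * x) = r * γ x) (i : ℕ) : QR 𝒜 i →ₗ[k] A :=
  (balR 𝒜 i).liftQ (hmapRaw 𝒜 γ i) (hmap_kill 𝒜 γ hγlin i)

@[simp] lemma hmap_mk (γ : A →ₗ[k] A) (hγlin : ∀ (r x : A), r ∈ 𝒜 0 → γ (r * x) = r * γ x) (i : ℕ) (w : ↥(𝒜 i)) (u : ↥(𝒜 1)) :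
    hmap 𝒜 γ hγlin i (Submodule.Quotient.mk (w ⊗ₜ[k] u)) = (w : A) * γ (u : A) := rfl

lemma hmap_LaMap (γ : A →ₗ[k] A) (hγlin : ∀ (r x : A), r ∈ 𝒜 0 → γ (r * x) = r * γ x) {c : ℕ} (a : ↥(𝒜 c)) (i : ℕ) (ξ : QR 𝒜 i) :
    hmap 𝒜 γ hγlin (c + i) (LaMap 𝒜 a i ξ) = (a : A) * hmap 𝒜 γ hγlin i ξ := by
  have : hmap 𝒜 γ hγlin (c + i) ∘ₗ LaMap 𝒜 a i =
      LinearMap.mulLeft k (a : A) ∘ₗ hmap 𝒜 γ hγlin i := by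
    refine Submodule.linearMap_qext _ (TensorProduct.ext' fun w u => ?_)
    simp [lmulC, mul_assoc]
  exact congrArg (fun f => f ξ) this

lemma rhoBar_LaMap {c : ℕ} (a : ↥(𝒜 c)) (i : ℕ) (ξ : QR 𝒜 i) :
    ((rhoBar 𝒜 (c + i) (LaMap 𝒜 a i ξ) : ↥(𝒜 (c + i + 1))) : A) =
      (a : A) * (rhoBar 𝒜 i ξ : A) := by
  have : (𝒜 (c + i + 1)).subtype ∘ₗ rhoBar 𝒜 (c + i) ∘ₗ LaMap 𝒜 a i =
      LinearMap.mulLeft k (a : A) ∘ₗ (𝒜 (i + 1)).subtype ∘ₗ rhoBar 𝒜 i := by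
    refine Submodule.linearMap_qext _ (TensorProduct.ext' fun w u => ?_)
    simp [lmulC, mul_assoc]
  exact congrArg (fun f => f ξ) this

lemma LaMap_symm {c : ℕ} (a : ↥(𝒜 c)) (i : ℕ)
    (hbij : ∀ i, Function.Bijective (rhoBar 𝒜 i)) (q : ↥(𝒜 (i + 1)))
    {q' : ↥(𝒜 (c + i + 1))} (hq' : (q' : A) = (a : A) * q) :
    (rhoE 𝒜 (c + i) (hbij (c + i))).symm q' =
      LaMap 𝒜 a i ((rhoE 𝒜 i (hbij i)).symm q) := by
  rw [LinearEquiv.symm_apply_eq]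
  apply Subtype.ext
  have h0 : rhoE 𝒜 (c + i) (hbij (c + i)) (LaMap 𝒜 a i ((rhoE 𝒜 i (hbij i)).symm q)) =
      rhoBar 𝒜 (c + i) (LaMap 𝒜 a i ((rhoE 𝒜 i (hbij i)).symm q)) := rfl
  rw [hq', h0, rhoBar_LaMap]
  congr 1
  exact (congrArg Subtype.val ((rhoE 𝒜 i (hbij i)).apply_symm_apply q)).symm

noncomputable def FF (γ : A →ₗ[k] A) (hγlin : ∀ (r x : A), r ∈ 𝒜 0 → γ (r * x) = r * γ x) (hbij : ∀ i, Function.Bijective (rhoBar 𝒜 i)) : A →ₗ[k] A :=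
  (DirectSum.toModule k ℕ A (fun m =>
    Nat.casesOn m (0 : ↥(𝒜 0) →ₗ[k] A)
      (fun i => hmap 𝒜 γ hγlin i ∘ₗ (rhoE 𝒜 i (hbij i)).symm.toLinearMap))) ∘ₗ
    (DirectSum.decomposeLinearEquiv 𝒜).toLinearMap

lemma FF_of_zero (γ : A →ₗ[k] A) (hγlin : ∀ (r x : A), r ∈ 𝒜 0 → γ (r * x) = r * γ x) (hbij) {x : A} (hx : x ∈ 𝒜 0) : FF 𝒜 γ hγlin hbij x = 0 := by
  rw [FF]
  simp only [LinearMap.comp_apply, LinearEquiv.coe_coe, DirectSum.decomposeLinearEquiv_apply]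
  rw [DirectSum.decompose_of_mem 𝒜 hx, ← DirectSum.lof_eq_of k, DirectSum.toModule_lof]
  rfl

lemma FF_of_succ (γ : A →ₗ[k] A) (hγlin : ∀ (r x : A), r ∈ 𝒜 0 → γ (r * x) = r * γ x) (hbij) {m : ℕ} {x : A} (hx : x ∈ 𝒜 (m + 1)) :
    FF 𝒜 γ hγlin hbij x =
      hmap 𝒜 γ hγlin m ((rhoE 𝒜 m (hbij m)).symm ⟨x, hx⟩) := by
  rw [FF]
  simp only [LinearMap.comp_apply, LinearEquiv.coe_coe, DirectSum.decomposeLinearEquiv_apply]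
  rw [DirectSum.decompose_of_mem 𝒜 hx, ← DirectSum.lof_eq_of k, DirectSum.toModule_lof]
  rfl

lemma FF_equiv (γ : A →ₗ[k] A) (hγlin : ∀ (r x : A), r ∈ 𝒜 0 → γ (r * x) = r * γ x) (hbij) {c : ℕ} {a : A} (ha : a ∈ 𝒜 c) {m : ℕ} {x : A} (hx : x ∈ 𝒜 (m + 1)) :
    FF 𝒜 γ hγlin hbij (a * x) = a * FF 𝒜 γ hγlin hbij x := by
  have hax : a * x ∈ 𝒜 (c + m + 1) := by
    have := SetLike.mul_mem_graded ha hx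
    exact this
  rw [FF_of_succ 𝒜 γ hγlin hbij hax, FF_of_succ 𝒜 γ hγlin hbij hx]
  rw [LaMap_symm 𝒜 ⟨a, ha⟩ m hbij ⟨x, hx⟩ (q' := ⟨a * x, hax⟩) rfl, hmap_LaMap]


lemma keyRepr {nn : ℕ} (b : Fin nn → A) (γ : Fin nn → (A →ₗ[k] A))
    (hγlin : ∀ j (r x : A), r ∈ 𝒜 0 → γ j (r * x) = r * γ j x)
    (hrepr : ∀ x ∈ 𝒜 1, x = ∑ j, γ j x * b j) (i : ℕ) (ξ : QR 𝒜 i) :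
    ∑ j, hmap 𝒜 (γ j) (hγlin j) i ξ * b j = ((rhoBar 𝒜 i ξ : ↥(𝒜 (i + 1))) : A) := by
  have : (∑ j, LinearMap.mulRight k (b j) ∘ₗ hmap 𝒜 (γ j) (hγlin j) i) =
      (𝒜 (i + 1)).subtype ∘ₗ rhoBar 𝒜 i := by
    refine Submodule.linearMap_qext _ (TensorProduct.ext' fun w u => ?_)
    simp only [LinearMap.sum_apply, LinearMap.comp_apply, Submodule.mkQ_apply, hmap_mk,
      LinearMap.mulRight_apply, Submodule.coe_subtype, rhoBar_mk, mulR_tmul]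
    simp only [mul_assoc]
    rw [← Finset.mul_sum, ← hrepr (u : A) u.2]
  have h2 := congrArg (fun f => f ξ) this
  simpa using h2

lemma backward (hgen : ∀ i j, 𝒜 i * 𝒜 j = 𝒜 (i + j))
    (hker : ∀ i, LinearMap.ker (gradedMulMap k A 𝒜 i) = balancedRel k A 𝒜 i)
    (hdb : IsDualBasisProj A (𝒜 0 : Set A) (𝒜 1 : Set A)) :
    Module.Projective A ↥(Submodule.span A {x : A | ∃ i, 0 < i ∧ x ∈ 𝒜 i}) := by
  classical
  have hbij := rhoBar_bijective 𝒜 hgen hker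
  obtain ⟨n, b, c, hb, hcadd, hc0, hclin, hrepr⟩ := hdb
  let γ : Fin n → A →ₗ[k] A := fun j =>
    { toFun := c j
      map_add' := hcadd j
      map_smul' := fun s x => by
        simp only [RingHom.id_apply]
        have h1 : (algebraMap k A) s ∈ 𝒜 0 := by
          rw [Algebra.algebraMap_eq_smul_one]
          exact Submodule.smul_mem _ _ (SetLike.one_mem_graded 𝒜)
        rw [Algebra.smul_def, hclin j _ x h1, ← Algebra.smul_def] }
  have hγlin : ∀ j (r x : A), r ∈ 𝒜 0 → γ j (r * x) = r * γ j x :=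
    fun j r x hr => hclin j r x hr
  have hrepr' : ∀ x ∈ 𝒜 1, x = ∑ j, γ j x * b j := hrepr
  set J := Submodule.span A {x : A | ∃ i, 0 < i ∧ x ∈ 𝒜 i} with hJdef
  have hre : ∀ (m : ℕ) (x : A), x ∈ 𝒜 (m + 1) →
      x = ∑ j, FF 𝒜 (γ j) (hγlin j) hbij x * b j := by
    intro m x hx
    have h2 : rhoBar 𝒜 m ((rhoE 𝒜 m (hbij m)).symm ⟨x, hx⟩) = ⟨x, hx⟩ :=
      (rhoE 𝒜 m (hbij m)).apply_symm_apply ⟨x, hx⟩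
    calc x = ((rhoBar 𝒜 m ((rhoE 𝒜 m (hbij m)).symm ⟨x, hx⟩) : ↥(𝒜 (m + 1))) : A) := by
          rw [h2]
      _ = ∑ j, hmap 𝒜 (γ j) (hγlin j) m ((rhoE 𝒜 m (hbij m)).symm ⟨x, hx⟩) * b j :=
          (keyRepr 𝒜 b γ hγlin hrepr' m _).symm
      _ = ∑ j, FF 𝒜 (γ j) (hγlin j) hbij x * b j := by
          refine Finset.sum_congr rfl fun j _ => ?_
          rw [FF_of_succ 𝒜 (γ j) (hγlin j) hbij hx]
  have main : ∀ x, x ∈ J →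
      ((∀ (j : Fin n) (a : A), FF 𝒜 (γ j) (hγlin j) hbij (a * x) =
          a * FF 𝒜 (γ j) (hγlin j) hbij x) ∧
        x = ∑ j, FF 𝒜 (γ j) (hγlin j) hbij x * b j) := by
    intro x hx
    refine Submodule.span_induction ?_ ?_ ?_ ?_ hx
    · rintro x ⟨i, hipos, hxi⟩
      obtain ⟨m, rfl⟩ : ∃ m, i = m + 1 := ⟨i - 1, by omega⟩
      refine ⟨?_, hre m x hxi⟩
      intro j a
      refine homog_induction 𝒜 (p := fun a => FF 𝒜 (γ j) (hγlin j) hbij (a * x) =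
        a * FF 𝒜 (γ j) (hγlin j) hbij x) ?_ ?_ ?_ a
      · simp
      · intro ci aa haa
        exact FF_equiv 𝒜 (γ j) (hγlin j) hbij haa hxi
      · intro u v hu hv
        rw [add_mul, map_add, hu, hv, add_mul]
    · exact ⟨fun j a => by simp, by simp⟩
    · intro x y hxm hym px py
      refine ⟨fun j a => by rw [mul_add, map_add, px.1 j a, py.1 j a, map_add, mul_add], ?_⟩
      simp only [map_add, add_mul, Finset.sum_add_distrib]
      rw [← px.2, ← py.2]
    · intro a x hxm px
      refine ⟨fun j a' => by
        rw [smul_eq_mul, ← mul_assoc, px.1 j (a' * a), px.1 j a, mul_assoc], ?_⟩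
      rw [smul_eq_mul]
      calc a * x = a * ∑ j, FF 𝒜 (γ j) (hγlin j) hbij x * b j := by rw [← px.2]
        _ = ∑ j, a * (FF 𝒜 (γ j) (hγlin j) hbij x * b j) := Finset.mul_sum _ _ _
        _ = ∑ j, FF 𝒜 (γ j) (hγlin j) hbij (a * x) * b j := by
            refine Finset.sum_congr rfl fun j _ => ?_
            rw [px.1 j a, mul_assoc]
  let bJ : Fin n → ↥J := fun j => ⟨b j, Submodule.subset_span ⟨1, one_pos, hb j⟩⟩
  let iMap : ↥J →ₗ[A] (Fin n → A) :=
    { toFun := fun x j => FF 𝒜 (γ j) (hγlin j) hbij (x : A)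
      map_add' := fun x y => by
        funext j
        simp only [Submodule.coe_add, map_add, Pi.add_apply]
      map_smul' := fun a x => by
        funext j
        simp only [RingHom.id_apply, Pi.smul_apply, smul_eq_mul, SetLike.val_smul]
        exact (main (x : A) x.2).1 j a }
  let sMap : (Fin n → A) →ₗ[A] ↥J :=
    { toFun := fun g => ∑ j, g j • bJ j
      map_add' := fun g g' => by
        simp only [Pi.add_apply, add_smul, Finset.sum_add_distrib]
      map_smul' := fun a g => by
        simp only [RingHom.id_apply, Pi.smul_apply, smul_eq_mul, Finset.smul_sum, mul_smul] }
  refine Module.Projective.of_split iMap sMap ?_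
  refine LinearMap.ext fun x => ?_
  apply Subtype.ext
  have h1 : ((sMap (iMap x) : ↥J) : A) = ∑ j, FF 𝒜 (γ j) (hγlin j) hbij (x : A) * b j := by
    simp only [sMap, iMap, LinearMap.coe_mk, AddHom.coe_mk, Submodule.coe_sum,
      SetLike.val_smul, smul_eq_mul]
    rfl
  rw [LinearMap.comp_apply, h1, LinearMap.id_apply, ← (main (x : A) x.2).2]

lemma mul_mem_shift {ci m : ℕ} {a x : A} (ha : a ∈ 𝒜 ci) (hx : x ∈ 𝒜 (m + 1)) :
    a * x ∈ 𝒜 (ci + m + 1) := by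
  have := SetLike.mul_mem_graded ha hx
  exact this

noncomputable def PhiFam (n : ℕ) (v : Fin n → ↥(𝒜 1))
    (g : Fin n → ∀ m : ℕ, ↥(𝒜 (m + 1)) →ₗ[k] ↥(𝒜 m)) :
    ∀ i : ℕ, ↥(𝒜 (1 + i)) →ₗ[k] (TensorProduct k ↥(𝒜 1) ↥(𝒜 i) ⧸ balancedRel k A 𝒜 i)
  | 0 => (balancedRel k A 𝒜 0).mkQ ∘ₗ ((TensorProduct.mk k ↥(𝒜 1) ↥(𝒜 0)).flip (one0 𝒜))
  | (i + 1) => ∑ s : Fin n, RvMap 𝒜 (v s) i ∘ₗ PhiFam n v g i ∘ₗ g s (1 + i) ∘ₗ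
      (castA 𝒜 (show 1 + (i + 1) = (1 + i) + 1 by omega)).toLinearMap

lemma Phi_mul (n : ℕ) (v : Fin n → ↥(𝒜 1))
    (g : Fin n → ∀ m : ℕ, ↥(𝒜 (m + 1)) →ₗ[k] ↥(𝒜 m))
    (hg : ∀ (s : Fin n) (ci m : ℕ) (a : A) (ha : a ∈ 𝒜 ci) (x : A) (hx : x ∈ 𝒜 (m + 1)),
      ((g s (ci + m) ⟨a * x, mul_mem_shift 𝒜 ha hx⟩ : ↥(𝒜 (ci + m))) : A) =
        a * ((g s m ⟨x, hx⟩ : ↥(𝒜 m)) : A))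
    (hrep : ∀ (m : ℕ) (x : ↥(𝒜 (m + 1))),
      (x : A) = ∑ s, ((g s m x : ↥(𝒜 m)) : A) * (v s : A)) :
    ∀ (i : ℕ) (z : TensorProduct k ↥(𝒜 1) ↥(𝒜 i)),
      PhiFam 𝒜 n v g i (gradedMulMap k A 𝒜 i z) = Submodule.Quotient.mk z := by
  intro i
  induction i with
  | zero =>
      intro z
      induction z using TensorProduct.induction_on with
      | zero => simp
      | tmul p q =>
          simp only [PhiFam, LinearMap.comp_apply, Submodule.mkQ_apply, LinearMap.flip_apply,
            TensorProduct.mk_apply]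
          rw [Submodule.Quotient.eq]
          exact bal_gen_mem 𝒜 (x := p) (r := q) (y := one0 𝒜)
            (x' := gradedMulMap k A 𝒜 0 (p ⊗ₜ[k] q)) (y' := q)
            (by rw [gradedMulMap_tmul]) (mul_one (q : A)).symm
      | add x y hx hy => rw [map_add, map_add, hx, hy]; rfl
  | succ i ih =>
      intro z
      induction z using TensorProduct.induction_on with
      | zero => simp
      | tmul p q =>
          have hcast : castA 𝒜 (show 1 + (i + 1) = (1 + i) + 1 by omega)
              (gradedMulMap k A 𝒜 (i + 1) (p ⊗ₜ[k] q)) =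
              ⟨(p : A) * q, mul_mem_shift 𝒜 p.2 q.2⟩ := by
            apply Subtype.ext
            rw [castA_coe, gradedMulMap_tmul]
          have hgs : ∀ s : Fin n, g s (1 + i)
              (⟨(p : A) * q, mul_mem_shift 𝒜 p.2 q.2⟩ : ↥(𝒜 ((1 + i) + 1))) =
              ⟨(p : A) * (g s i q : A),
                SetLike.mul_mem_graded p.2 (g s i q).2⟩ := by
            intro s
            exact Subtype.ext (hg s 1 i (p : A) p.2 (q : A) q.2)
          have hmm : ∀ s : Fin n,
              (⟨(p : A) * (g s i q : A), SetLike.mul_mem_graded p.2 (g s i q).2⟩ :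
                ↥(𝒜 (1 + i))) = gradedMulMap k A 𝒜 i (p ⊗ₜ[k] (g s i q)) := by
            intro s
            exact Subtype.ext (by rw [gradedMulMap_tmul])
          simp only [PhiFam, LinearMap.sum_apply, LinearMap.comp_apply, LinearEquiv.coe_coe]
          rw [show ∀ w, castA 𝒜 (show 1 + (i + 1) = (1 + i) + 1 by omega) w =
            castA 𝒜 (show 1 + (i + 1) = (1 + i) + 1 by omega) w from fun _ => rfl]
          calc (∑ s : Fin n, RvMap 𝒜 (v s) i (PhiFam 𝒜 n v g i (g s (1 + i)
                (castA 𝒜 (show 1 + (i + 1) = (1 + i) + 1 by omega)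
                  (gradedMulMap k A 𝒜 (i + 1) (p ⊗ₜ[k] q))))))
              = ∑ s : Fin n, Submodule.Quotient.mk (p ⊗ₜ[k] (rmulG1 𝒜 (v s) i (g s i q))) := by
                refine Finset.sum_congr rfl fun s _ => ?_
                rw [hcast, hgs s, hmm s, ih, RvMap_mk]
            _ = Submodule.Quotient.mk (p ⊗ₜ[k] (∑ s : Fin n, rmulG1 𝒜 (v s) i (g s i q))) := by
                rw [TensorProduct.tmul_sum]
                exact (map_sum ((balancedRel k A 𝒜 (i + 1)).mkQ) _ _).symm
            _ = Submodule.Quotient.mk (p ⊗ₜ[k] q) := by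
                congr 1
                congr 1
                apply Subtype.ext
                rw [Submodule.coe_sum]
                exact (hrep i q).symm ▸ rfl
      | add x y hx hy => rw [map_add, map_add, hx, hy]; rfl

lemma forward [FiniteDimensional k A] (hgen : ∀ i j, 𝒜 i * 𝒜 j = 𝒜 (i + j))
    (hproj : Module.Projective A ↥(Submodule.span A {x : A | ∃ i, 0 < i ∧ x ∈ 𝒜 i})) :
    (∀ i, LinearMap.ker (gradedMulMap k A 𝒜 i) = balancedRel k A 𝒜 i) ∧
      IsDualBasisProj A ((𝒜 0 : Submodule k A) : Set A) ((𝒜 1 : Submodule k A) : Set A) := by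
  classical
  haveI := hproj
  set J := Submodule.span A {x : A | ∃ i, 0 < i ∧ x ∈ 𝒜 i} with hJdef
  have hmemJ : ∀ {i : ℕ} {x : A}, 0 < i → x ∈ 𝒜 i → x ∈ J :=
    fun {i x} hi hx => Submodule.subset_span ⟨i, hi, hx⟩
  obtain ⟨n, v, hv⟩ := Module.Finite.exists_fin (R := k) (M := ↥(𝒜 1))
  let vJ : Fin n → ↥J := fun s => ⟨(v s : A), hmemJ one_pos (v s).2⟩
  let hmapJ : (Fin n → A) →ₗ[A] ↥J :=
    { toFun := fun g => ∑ s, g s • vJ s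
      map_add' := fun g g' => by simp only [Pi.add_apply, add_smul, Finset.sum_add_distrib]
      map_smul' := fun a g => by
        simp only [RingHom.id_apply, Pi.smul_apply, smul_eq_mul, Finset.smul_sum, mul_smul] }
  have hsingle : ∀ s, hmapJ (Pi.single s 1) = vJ s := by
    intro s
    simp only [hmapJ, LinearMap.coe_mk, AddHom.coe_mk]
    rw [Finset.sum_eq_single s]
    · rw [Pi.single_eq_same, one_smul]
    · intro t _ hts
      rw [Pi.single_eq_of_ne hts, zero_smul]
    · intro hs
      exact absurd (Finset.mem_univ s) hs
  have hsurjJ : Function.Surjective hmapJ := by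
    set R' : Submodule A A := (LinearMap.range hmapJ).map J.subtype with hR'
    have hsub : ∀ s, (v s : A) ∈ R' := fun s =>
      ⟨vJ s, ⟨Pi.single s 1, hsingle s⟩, rfl⟩
    have hA1 : ((𝒜 1 : Submodule k A) : Set A) ⊆ (R' : Set A) := by
      intro w hw
      have h1 : (⟨w, hw⟩ : ↥(𝒜 1)) ∈ Submodule.span k (Set.range v) := by
        rw [hv]; trivial
      have h2 : w ∈ Submodule.map (𝒜 1).subtype (Submodule.span k (Set.range v)) :=
        ⟨_, h1, rfl⟩
      rw [Submodule.map_span] at h2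
      have h3 : Submodule.span k ((𝒜 1).subtype '' Set.range v) ≤ R'.restrictScalars k := by
        rw [Submodule.span_le]
        rintro _ ⟨_, ⟨s, rfl⟩, rfl⟩
        exact hsub s
      exact h3 h2
    have hS : {x : A | ∃ i, 0 < i ∧ x ∈ 𝒜 i} ⊆ (R' : Set A) := by
      rintro x ⟨i, hipos, hxi⟩
      obtain ⟨m, rfl⟩ : ∃ m, i = m + 1 := ⟨i - 1, by omega⟩
      have hx' : x ∈ 𝒜 m * 𝒜 1 := by rw [hgen m 1]; exact hxi
      refine Submodule.mul_induction_on hx' ?_ ?_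
      · intro p _ q hq
        have := R'.smul_mem p (hA1 hq)
        rwa [smul_eq_mul] at this
      · intro a b ha hb
        exact R'.add_mem ha hb
    have hJR : J ≤ R' := Submodule.span_le.mpr hS
    intro x
    obtain ⟨y, hy, hyx⟩ := hJR x.2
    obtain ⟨g, hg⟩ := hy
    exact ⟨g, by rw [hg]; exact Subtype.ext hyx⟩
  obtain ⟨sec, hsec⟩ := Module.projective_lifting_property hmapJ LinearMap.id hsurjJ
  have hdual : ∀ x : ↥J, (x : A) = ∑ s, sec x s * (v s : A) := by
    intro x
    have h1 : hmapJ (sec x) = x := by rw [← LinearMap.comp_apply, hsec]; rfl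
    have h2 := congrArg Subtype.val h1
    rw [show ((hmapJ (sec x) : ↥J) : A) = ∑ s, sec x s * (v s : A) from by
      show ((∑ s, sec x s • vJ s : ↥J) : A) = _
      rw [Submodule.coe_sum]
      rfl] at h2
    exact h2.symm
  have hsecadd : ∀ (a b : A) (ha : a ∈ J) (hb : b ∈ J) (hab : a + b ∈ J),
      sec ⟨a + b, hab⟩ = sec ⟨a, ha⟩ + sec ⟨b, hb⟩ := by
    intro a b ha hb hab
    rw [show (⟨a + b, hab⟩ : ↥J) = ⟨a, ha⟩ + ⟨b, hb⟩ from Subtype.ext rfl, map_add]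
  have hsecsmul : ∀ (t : k) (a : A) (ha : a ∈ J) (hta : t • a ∈ J),
      sec ⟨t • a, hta⟩ = t • sec ⟨a, ha⟩ := by
    intro t a ha hta
    rw [show (⟨t • a, hta⟩ : ↥J) = t • ⟨a, ha⟩ from Subtype.ext rfl,
      LinearMap.map_smul_of_tower]
  have hsecmul : ∀ (t a : A) (ha : a ∈ J) (hta : t * a ∈ J),
      sec ⟨t * a, hta⟩ = t • sec ⟨a, ha⟩ := by
    intro t a ha hta
    rw [show (⟨t * a, hta⟩ : ↥J) = t • ⟨a, ha⟩ from Subtype.ext rfl, map_smul]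
  have hI1 : ∀ (d : ℕ) (x : A) (hx : x ∈ 𝒜 (d + 1)),
      x = ∑ s, pr 𝒜 d (sec ⟨x, hmemJ (Nat.succ_pos d) hx⟩ s) * (v s : A) := by
    intro d x hx
    have h0 := hdual ⟨x, hmemJ (Nat.succ_pos d) hx⟩
    have h1 := congrArg (pr 𝒜 (d + 1)) h0
    rw [pr_of_mem_same 𝒜 hx, map_sum] at h1
    exact h1.trans (Finset.sum_congr rfl fun s _ => pr_mul_right 𝒜 (v s).2 _ d)
  have hI2 : ∀ (cdeg ddeg : ℕ) (a : A) (ha : a ∈ 𝒜 cdeg) (q : A) (hq : q ∈ 𝒜 (ddeg + 1)) (s : Fin n),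
      pr 𝒜 (cdeg + ddeg) (sec ⟨a * q, hmemJ (Nat.succ_pos _) (mul_mem_shift 𝒜 ha hq)⟩ s) =
        a * pr 𝒜 ddeg (sec ⟨q, hmemJ (Nat.succ_pos ddeg) hq⟩ s) := by
    intro cdeg ddeg a ha q hq s
    rw [hsecmul a q (hmemJ (Nat.succ_pos ddeg) hq) _]
    exact pr_mul_left 𝒜 ha _ ddeg
  constructor
  · -- kernel condition
    intro i
    refine le_antisymm ?_ (bal_le_ker 𝒜 i)
    let g : Fin n → ∀ m : ℕ, ↥(𝒜 (m + 1)) →ₗ[k] ↥(𝒜 m) := fun s m =>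
      { toFun := fun x => ⟨pr 𝒜 m (sec ⟨(x : A), hmemJ (Nat.succ_pos m) x.2⟩ s), pr_mem 𝒜 m _⟩
        map_add' := fun x y => Subtype.ext (by
          simp only [Submodule.coe_add]
          rw [hsecadd (x : A) (y : A) (hmemJ (Nat.succ_pos m) x.2)
            (hmemJ (Nat.succ_pos m) y.2) _]
          simp)
        map_smul' := fun t x => Subtype.ext (by
          simp only [SetLike.val_smul, RingHom.id_apply]
          rw [hsecsmul t (x : A) (hmemJ (Nat.succ_pos m) x.2) _]
          simp) }
    have hg : ∀ (s : Fin n) (ci m : ℕ) (a : A) (ha : a ∈ 𝒜 ci) (x : A) (hx : x ∈ 𝒜 (m + 1)),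
        ((g s (ci + m) ⟨a * x, mul_mem_shift 𝒜 ha hx⟩ : ↥(𝒜 (ci + m))) : A) =
          a * ((g s m ⟨x, hx⟩ : ↥(𝒜 m)) : A) := by
      intro s ci m a ha x hx
      show pr 𝒜 (ci + m) (sec ⟨a * x, _⟩ s) = a * pr 𝒜 m (sec ⟨x, _⟩ s)
      exact hI2 ci m a ha x hx s
    have hrep : ∀ (m : ℕ) (x : ↥(𝒜 (m + 1))),
        (x : A) = ∑ s, ((g s m x : ↥(𝒜 m)) : A) * (v s : A) := by
      intro m x
      exact hI1 m (x : A) x.2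
    intro z hz
    have := Phi_mul 𝒜 n v g hg hrep i z
    rw [LinearMap.mem_ker.mp hz, map_zero] at this
    exact (Submodule.Quotient.mk_eq_zero _).mp this.symm
  · -- dual basis
    refine ⟨n, fun s => (v s : A),
      fun s y => pr 𝒜 0 (sec ⟨pr 𝒜 1 y, hmemJ one_pos (pr_mem 𝒜 1 y)⟩ s), ?_, ?_, ?_, ?_, ?_⟩
    · exact fun s => (v s).2
    · intro s x y
      beta_reduce
      have e1 : pr 𝒜 1 (x + y) = pr 𝒜 1 x + pr 𝒜 1 y := map_add _ _ _
      have e2 : (⟨pr 𝒜 1 (x + y), hmemJ one_pos (pr_mem 𝒜 1 (x + y))⟩ : ↥J) =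
          ⟨pr 𝒜 1 x + pr 𝒜 1 y, by rw [← e1]; exact hmemJ one_pos (pr_mem 𝒜 1 (x + y))⟩ :=
        Subtype.ext e1
      rw [e2, hsecadd (pr 𝒜 1 x) (pr 𝒜 1 y) (hmemJ one_pos (pr_mem 𝒜 1 x))
        (hmemJ one_pos (pr_mem 𝒜 1 y)) _]
      simp
    · intro s x
      exact pr_mem 𝒜 0 _
    · intro s r x hr
      beta_reduce
      have h1 : pr 𝒜 1 (r * x) = r * pr 𝒜 1 x := by
        have := pr_mul_left 𝒜 (x := r) hr x 1
        simpa using this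
      have e2 : (⟨pr 𝒜 1 (r * x), hmemJ one_pos (pr_mem 𝒜 1 (r * x))⟩ : ↥J) =
          ⟨r * pr 𝒜 1 x, by rw [← h1]; exact hmemJ one_pos (pr_mem 𝒜 1 (r * x))⟩ :=
        Subtype.ext h1
      rw [e2, hsecmul r (pr 𝒜 1 x) (hmemJ one_pos (pr_mem 𝒜 1 x)) _]
      have h4 : (r • sec ⟨pr 𝒜 1 x, hmemJ one_pos (pr_mem 𝒜 1 x)⟩) s =
          r * sec ⟨pr 𝒜 1 x, hmemJ one_pos (pr_mem 𝒜 1 x)⟩ s := rfl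
      rw [h4]
      have h5 := pr_mul_left 𝒜 (x := r) hr (sec ⟨pr 𝒜 1 x, hmemJ one_pos (pr_mem 𝒜 1 x)⟩ s) 0
      simpa using h5
    · intro x hx
      beta_reduce
      have h0 := hI1 0 x hx
      have h1 : (⟨pr 𝒜 1 x, hmemJ one_pos (pr_mem 𝒜 1 x)⟩ : ↥J) =
          ⟨x, hmemJ (Nat.succ_pos 0) hx⟩ := Subtype.ext (pr_of_mem_same 𝒜 hx)
      refine h0.trans (Finset.sum_congr rfl fun s _ => ?_)
      rw [h1]

end S14

/-- For a finite-dimensional graded algebra `A = ⊕ A_i` with `A_i · A_j = A_{i+j}`,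
the ideal `J = ⊕_{i ≥ 1} A_i` is a projective left `A`-module iff `A` is the
tensor algebra `A_0[A_1]` (multiplication induces isomorphisms
`A_1 ⊗_{A_0} A_i ≅ A_{1+i}`) and `A_1` is a projective left `A_0`-module. -/
theorem stmt14 (k A : Type) [Field k] [Ring A] [Algebra k A] [FiniteDimensional k A]
    (𝒜 : ℕ → Submodule k A) [GradedRing 𝒜]
    (hgen : ∀ i j, 𝒜 i * 𝒜 j = 𝒜 (i + j)) :
    Module.Projective A ↥(Submodule.span A {x : A | ∃ i, 0 < i ∧ x ∈ 𝒜 i}) ↔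
      ((∀ i, Function.Surjective (gradedMulMap k A 𝒜 i) ∧
          LinearMap.ker (gradedMulMap k A 𝒜 i) = balancedRel k A 𝒜 i) ∧
        IsDualBasisProj A (𝒜 0 : Set A) (𝒜 1 : Set A)) := by
  constructor
  · intro hproj
    obtain ⟨hker, hdb⟩ := S14.forward 𝒜 hgen hproj
    exact ⟨fun i => ⟨S14.gradedMulMap_surjective 𝒜 hgen i, hker i⟩, hdb⟩
  · rintro ⟨hAll, hdb⟩
    exact S14.backward 𝒜 hgen (fun i => (hAll i).2) hdb
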